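/- Let n ≥ 3 and let b = (x_1,…,x_n, x_0, x̄_n,…,x̄_1) be an element of the level-l B_n^{(1)} perfect crystal with x_1 < x̄_1 and x_2 ≥ x̄_2. Let b' = f̃_0(b) = (x_1, x_2+1, x_3,…,x_n | x_0 | x̄_n,…,x̄_2, x̄_1−1). Then the primed coordinates of b' relate to those of b as follows: x'_1(b') = x'_1(b), x'_2(b') = x'_2(b) + 1, x̄'_1(b') = x̄'_1(b) − 1, and all other primed coordinates coincide: x'_i(b') = x'_i(b) for 3 ≤ i ≤ n, x'_0(b') = x'_0(b), x̄'_i(b') = x̄'_i(b) for 2 ≤ i ≤ n. (This is the compatibility ψ(f̃_0 b) = f̃_0 ψ(b) in this case.) -/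
import Mathlib


def xprime (x xb : ℕ → ℕ) (i : ℕ) : ℕ :=
  if i = 1 then x 1 - xb 1 else (x i - xb i) + min (x (i - 1)) (xb (i - 1))

def xbprime (x xb : ℕ → ℕ) (i : ℕ) : ℕ :=
  if i = 1 then xb 1 - x 1 else (xb i - x i) + min (x (i - 1)) (xb (i - 1))

def x0prime (n : ℕ) (x xb : ℕ → ℕ) (x0 : ℕ) : ℕ := x0 + 2 * min (x n) (xb n)

theorem stmt_15 (n l : ℕ) (hn : 3 ≤ n)
    (x xb : ℕ → ℕ) (x0 : ℕ) (hx0 : x0 ≤ 1)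
    (hsum : x0 + ∑ i ∈ Finset.Icc 1 n, (x i + xb i) = l)
    (h1 : x 1 < xb 1) (h2 : xb 2 ≤ x 2)
    -- `b' = f̃₀(b)`: replace `x₂` by `x₂ + 1` and `x̄₁` by `x̄₁ - 1`
    (x' xb' : ℕ → ℕ)
    (hx' : x' = Function.update x 2 (x 2 + 1))
    (hxb' : xb' = Function.update xb 1 (xb 1 - 1)) :
    xprime x' xb' 1 = xprime x xb 1 ∧
    xprime x' xb' 2 = xprime x xb 2 + 1 ∧
    xbprime x' xb' 1 = xbprime x xb 1 - 1 ∧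
    (∀ i, 3 ≤ i → i ≤ n → xprime x' xb' i = xprime x xb i) ∧
    x0prime n x' xb' x0 = x0prime n x xb x0 ∧
    (∀ i, 2 ≤ i → i ≤ n → xbprime x' xb' i = xbprime x xb i) := by
  subst hx' hxb'
  refine ⟨?_, ?_, ?_, ?_, ?_, ?_⟩
  · simp only [xprime, Function.update]
    norm_num
    omega
  · simp only [xprime, Function.update]
    norm_num
    omega
  · simp only [xbprime, Function.update]
    norm_num
    omega
  · intro i h3 hin
    simp only [xprime, Function.update]
    have hi1 : i ≠ 1 := by omega
    have hi2 : i ≠ 2 := by omega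
    rcases eq_or_ne i 3 with rfl | hi3
    · norm_num; omega
    · have : i - 1 ≠ 2 := by omega
      have : i - 1 ≠ 1 := by omega
      simp_all
  · simp only [x0prime, Function.update]
    have : n ≠ 2 := by omega
    have : n ≠ 1 := by omega
    simp_all
  · intro i h2i hin
    simp only [xbprime, Function.update]
    have hi1 : i ≠ 1 := by omega
    rcases eq_or_ne i 2 with rfl | hi2
    · norm_num; omega
    · rcases eq_or_ne i 3 with rfl | hi3
      · norm_num; omega
      · have : i - 1 ≠ 2 := by omega
        have : i - 1 ≠ 1 := by omega
        simp_all
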